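/- Let K be a field of characteristic zero, let n ≥ 2, and let L = FreeLieAlgebra K (Fin n) with canonical embedding ι. Define the multilinear Lie monomials supported on a nonempty finite set s ⊆ Fin n inductively: ι i is a multilinear monomial supported on {i}; and if y, z are multilinear monomials supported on disjoint nonempty sets s₁, s₂ then ⁅y, z⁆ is a multilinear monomial supported on s₁ ∪ s₂. Then every multilinear Lie monomial supported on all of Fin n lies in the K-linear span of the right-normed brackets b_σ = ⁅ι(σ 0), ⁅ι(σ 1), ⋯, ⁅ι(σ (n-2)), ι (n-1)⁆⋯⁆⁆, where σ ranges over permutations of Fin (n-1). -/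

import Mathlib

/-- Multilinear Lie monomials in `FreeLieAlgebra K (Fin n)`, supported on a (nonempty)
finite subset of `Fin n`: a generator `ι i` is supported on `{i}`, and the bracket of
monomials supported on disjoint nonempty sets `s₁`, `s₂` is supported on `s₁ ∪ s₂`. -/
inductive IsMultilinearMonomial (K : Type*) [Field K] (n : ℕ) :
    FreeLieAlgebra K (Fin n) → Finset (Fin n) → Prop
  | of (i : Fin n) : IsMultilinearMonomial K n (FreeLieAlgebra.of K i) {i}
  | bracket {y z : FreeLieAlgebra K (Fin n)} {s₁ s₂ : Finset (Fin n)} :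
      IsMultilinearMonomial K n y s₁ → IsMultilinearMonomial K n z s₂ →
      s₁.Nonempty → s₂.Nonempty → Disjoint s₁ s₂ →
      IsMultilinearMonomial K n ⁅y, z⁆ (s₁ ∪ s₂)

namespace RNAux

variable (K : Type*) [Field K] (m : ℕ)

/-- right-normed bracket over a list, ending in `ι (last)`. -/
noncomputable def rn (w : List (Fin (m + 2))) : FreeLieAlgebra K (Fin (m + 2)) :=
  w.foldr (fun i x => ⁅FreeLieAlgebra.of K i, x⁆) (FreeLieAlgebra.of K (Fin.last (m + 1)))

def RSet (s : Finset (Fin (m + 2))) : Set (FreeLieAlgebra K (Fin (m + 2))) :=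
  {x | ∃ w : List (Fin (m + 2)), w.Nodup ∧ Fin.last (m + 1) ∉ w ∧
    insert (Fin.last (m + 1)) w.toFinset = s ∧ x = rn K m w}

noncomputable def R (s : Finset (Fin (m + 2))) : Submodule K (FreeLieAlgebra K (Fin (m + 2))) :=
  Submodule.span K (RSet K m s)

variable {K m}

lemma lemA {y : FreeLieAlgebra K (Fin (m + 2))} {s₁ : Finset (Fin (m + 2))}
    (hy : IsMultilinearMonomial K (m + 2) y s₁) :
    Fin.last (m + 1) ∉ s₁ → ∀ (s₂ : Finset (Fin (m + 2))) (z : FreeLieAlgebra K (Fin (m + 2))),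
      Disjoint s₁ s₂ → z ∈ R K m s₂ → ⁅y, z⁆ ∈ R K m (s₁ ∪ s₂) := by
  induction hy with
  | of i =>
      intro hl s₂ z hdis hz
      have hil : i ≠ Fin.last (m + 1) := by
        rintro rfl; exact hl (Finset.mem_singleton_self _)
      have his : i ∉ s₂ := Finset.disjoint_singleton_left.mp hdis
      refine Submodule.span_induction ?_ ?_ ?_ ?_ hz
      · rintro _ ⟨w, hnd, hlw, hins, rfl⟩
        refine Submodule.subset_span ⟨i :: w, ?_, ?_, ?_, rfl⟩
        · refine List.nodup_cons.mpr ⟨fun hiw => his ?_, hnd⟩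
          rw [← hins]; exact Finset.mem_insert_of_mem (List.mem_toFinset.mpr hiw)
        · simp only [List.mem_cons, not_or]
          exact ⟨fun h => hil h.symm, hlw⟩
        · rw [List.toFinset_cons, Finset.insert_comm, hins, Finset.insert_eq]
      · simp
      · intro a b _ _ ha hb
        rw [lie_add]; exact add_mem ha hb
      · intro c a _ ha
        rw [lie_smul]; exact Submodule.smul_mem _ _ ha
  | bracket hu hv hne₁ hne₂ hdis ihu ihv =>
      rename_i u v su sv
      intro hl s₂ z hdis2 hz
      have hlu : Fin.last (m + 1) ∉ su := fun h => hl (Finset.mem_union_left _ h)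
      have hlv : Fin.last (m + 1) ∉ sv := fun h => hl (Finset.mem_union_right _ h)
      have hdu : Disjoint su s₂ := (Finset.disjoint_union_left.mp hdis2).1
      have hdv : Disjoint sv s₂ := (Finset.disjoint_union_left.mp hdis2).2
      have h1 : ⁅v, z⁆ ∈ R K m (sv ∪ s₂) := ihv hlv _ _ hdv hz
      have h2 : ⁅u, ⁅v, z⁆⁆ ∈ R K m (su ∪ (sv ∪ s₂)) :=
        ihu hlu _ _ (Finset.disjoint_union_right.mpr ⟨hdis, hdu⟩) h1
      have h3 : ⁅u, z⁆ ∈ R K m (su ∪ s₂) := ihu hlu _ _ hdu hz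
      have h4 : ⁅v, ⁅u, z⁆⁆ ∈ R K m (sv ∪ (su ∪ s₂)) :=
        ihv hlv _ _ (Finset.disjoint_union_right.mpr ⟨hdis.symm, hdv⟩) h3
      rw [lie_lie]
      have e1 : su ∪ (sv ∪ s₂) = su ∪ sv ∪ s₂ := (Finset.union_assoc _ _ _).symm
      have e2 : sv ∪ (su ∪ s₂) = su ∪ sv ∪ s₂ := by
        rw [← Finset.union_assoc, Finset.union_comm sv su]
      rw [e1] at h2; rw [e2] at h4
      exact sub_mem h2 h4

lemma lemB {x : FreeLieAlgebra K (Fin (m + 2))} {s : Finset (Fin (m + 2))}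
    (hx : IsMultilinearMonomial K (m + 2) x s) :
    Fin.last (m + 1) ∈ s → x ∈ R K m s := by
  induction hx with
  | of i =>
      intro hl
      rw [Finset.mem_singleton] at hl
      subst hl
      exact Submodule.subset_span ⟨[], by simp, by simp, by simp, rfl⟩
  | bracket hy hz hne₁ hne₂ hdis ihy ihz =>
      rename_i y z s₁ s₂
      intro hl
      rcases Finset.mem_union.mp hl with h | h
      · have hls₂ : Fin.last (m + 1) ∉ s₂ := fun h2 => (Finset.disjoint_left.mp hdis h) h2
        have := lemA hz hls₂ s₁ y hdis.symm (ihy h)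
        rw [Finset.union_comm] at this
        have : -⁅z, y⁆ ∈ R K m (s₁ ∪ s₂) := neg_mem this
        rwa [lie_skew] at this
      · have hls₁ : Fin.last (m + 1) ∉ s₁ := fun h1 => (Finset.disjoint_left.mp hdis h1) h
        exact lemA hy hls₁ s₂ z hdis (ihz h)

end RNAux

/-- Every multilinear Lie monomial supported on all of `Fin n` (with `n = m + 2 ≥ 2`)
lies in the `K`-linear span of the right-normed brackets
`b_σ = ⁅ι(σ 0), ⁅ι(σ 1), ⋯, ⁅ι(σ (n-2)), ι (n-1)⁆⋯⁆⁆`, `σ` a permutation of `Fin (n-1)`. -/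
theorem multilinearMonomial_mem_span_rightNormed (K : Type*) [Field K] [CharZero K] (m : ℕ)
    (b : Equiv.Perm (Fin (m + 1)) → FreeLieAlgebra K (Fin (m + 2)))
    (hb : ∀ σ : Equiv.Perm (Fin (m + 1)),
      b σ = (List.finRange (m + 1)).foldr
        (fun i x => ⁅FreeLieAlgebra.of K (Fin.castSucc (σ i)), x⁆)
        (FreeLieAlgebra.of K (Fin.last (m + 1))))
    (x : FreeLieAlgebra K (Fin (m + 2)))
    (hx : IsMultilinearMonomial K (m + 2) x Finset.univ) :
    x ∈ Submodule.span K (Set.range b) := by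
  have hmem : x ∈ RNAux.R K m Finset.univ := RNAux.lemB hx (Finset.mem_univ _)
  refine Submodule.span_le.mpr ?_ hmem
  rintro _ ⟨w, hnd, hlw, hins, rfl⟩
  -- w is a nodup list of elements of Fin (m+2), not containing last, covering all others
  -- build w' : List (Fin (m+1))
  have hwne : ∀ i ∈ w, i ≠ Fin.last (m + 1) := fun i hi he => hlw (he ▸ hi)
  set w' : List (Fin (m + 1)) := w.pmap Fin.castPred hwne with hw'
  have hmap : w'.map Fin.castSucc = w := by
    rw [hw', List.map_pmap]
    simp only [Fin.castSucc_castPred]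
    exact List.pmap_eq_map _ ▸ List.map_id w
  have hlenw : w.length = m + 1 := by
    have h1 : w.toFinset.card = w.length := List.toFinset_card_of_nodup hnd
    have h2 : Fin.last (m + 1) ∉ w.toFinset := fun h => hlw (List.mem_toFinset.mp h)
    have h3 : (insert (Fin.last (m + 1)) w.toFinset).card = w.toFinset.card + 1 :=
      Finset.card_insert_of_notMem h2
    rw [hins] at h3
    simp only [Finset.card_univ, Fintype.card_fin] at h3
    omega
  have hlen : w'.length = m + 1 := by rw [hw', List.length_pmap]; exact hlenw
  have hnd' : w'.Nodup := by
    refine List.Nodup.pmap ?_ hnd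
    intro a ha b hb hab
    have := congrArg Fin.castSucc hab
    rwa [Fin.castSucc_castPred, Fin.castSucc_castPred] at this
  set g : Fin (m + 1) → Fin (m + 1) := fun i => w'.get ⟨i.1, by rw [hlen]; exact i.isLt⟩
    with hg
  have hginj : Function.Injective g := by
    intro i j hij
    have hinj := List.nodup_iff_injective_get.mp hnd'
    have := hinj hij
    exact Fin.ext (by simpa using congrArg Fin.val this)
  let σ : Equiv.Perm (Fin (m + 1)) :=
    Equiv.ofBijective g (Finite.injective_iff_bijective.mp hginj)
  have hmapg : (List.finRange (m + 1)).map g = w' := by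
    refine List.ext_get ?_ ?_
    · simp [hlen]
    · intro i h1 h2
      simp only [List.get_eq_getElem, List.getElem_map, List.getElem_finRange, hg]; rfl
  refine Submodule.subset_span ⟨σ, ?_⟩
  rw [hb σ]
  show _ = RNAux.rn K m w
  have hσ : ∀ i, σ i = g i := fun i => rfl
  calc (List.finRange (m + 1)).foldr
        (fun i x => ⁅FreeLieAlgebra.of K (Fin.castSucc (σ i)), x⁆)
        (FreeLieAlgebra.of K (Fin.last (m + 1)))
      = ((List.finRange (m + 1)).map g).foldr
        (fun a x => ⁅FreeLieAlgebra.of K (Fin.castSucc a), x⁆)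
        (FreeLieAlgebra.of K (Fin.last (m + 1))) := by
        rw [List.foldr_map]; rfl
    _ = (w'.map Fin.castSucc).foldr
        (fun a x => ⁅FreeLieAlgebra.of K a, x⁆)
        (FreeLieAlgebra.of K (Fin.last (m + 1))) := by
        rw [hmapg, List.foldr_map]
    _ = RNAux.rn K m w := by rw [hmap]; rfl
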